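/- Let m ∈ ℕ and y ∈ Y_m. Then there exists a pair (x, x') ∈ X_m × X_m such that: (i) x + x' = y; (ii) 𝔖(x) ∪ 𝔖(x') = R(y) and 𝔖(x) ∩ 𝔖(x') = R_0(y); and (iii) if 𝔉(y) contains no interval of odd cardinality then 𝔖(x') = ∅. In other words, the set S(y) of such pairs is nonempty. -/
import Mathlib


open Finset

/-- `X_m`: sequences `(x_0,…,x_m)` in `ℕ` with `x i ≤ x (i+1)` and `x i < x (i+2)`. -/
def IsX (m : ℕ) (x : ℕ → ℕ) : Prop :=
  (∀ i, i < m → x i ≤ x (i + 1)) ∧ (∀ i, i + 2 ≤ m → x i < x (i + 2))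

/-- `Y_m`: sequences with `y i ≤ y (i+1)` and `y i + 2 ≤ y (i+2)`. -/
def IsY (m : ℕ) (y : ℕ → ℕ) : Prop :=
  (∀ i, i < m → y i ≤ y (i + 1)) ∧ (∀ i, i + 2 ≤ m → y i + 2 ≤ y (i + 2))

/-- `ℰ_m`: weakly increasing sequences. -/
def IsE (m : ℕ) (e : ℕ → ℕ) : Prop := ∀ i, i < m → e i ≤ e (i + 1)

/-- `𝔖(x)`: indices `i ∈ [0,m]` with `x (i-1) < x i < x (i+1)`,
with conventions `x_{-1} = -∞`, `x_{m+1} = +∞`. -/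
def SS (m : ℕ) (x : ℕ → ℕ) : Finset ℕ :=
  (Finset.range (m + 1)).filter
    (fun i => (i = 0 ∨ x (i - 1) < x i) ∧ (i = m ∨ x i < x (i + 1)))

/-- `𝔉(y)`: intervals `[i,j] ⊆ [0,m]` with
`y_{i-1}-(i-1) < y_i-i = ⋯ = y_j-j < y_{j+1}-(j+1)` (conventions `±∞` at the ends),
encoded as pairs `(i, j)`. -/
def FF (m : ℕ) (y : ℕ → ℕ) : Finset (ℕ × ℕ) :=
  ((Finset.range (m + 1)) ×ˢ (Finset.range (m + 1))).filter
    (fun p => p.1 ≤ p.2 ∧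
      (p.1 = 0 ∨ ((y (p.1 - 1) : ℤ) - ((p.1 : ℤ) - 1) < (y p.1 : ℤ) - (p.1 : ℤ))) ∧
      (p.2 = m ∨ ((y p.2 : ℤ) - (p.2 : ℤ) < (y (p.2 + 1) : ℤ) - ((p.2 : ℤ) + 1))) ∧
      (∀ k ∈ Finset.Ico p.1 p.2, ((y k : ℤ) - (k : ℤ) = (y (k + 1) : ℤ) - ((k : ℤ) + 1))))

/-- `𝔉'(y)`: the intervals in `𝔉(y)` of odd cardinality. -/
def FF' (m : ℕ) (y : ℕ → ℕ) : Finset (ℕ × ℕ) :=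
  (FF m y).filter (fun p => Odd (p.2 - p.1 + 1))

/-- `R(y)`: endpoints of intervals in `𝔉(y)`. -/
def RR (m : ℕ) (y : ℕ → ℕ) : Finset ℕ :=
  (Finset.range (m + 1)).filter (fun k => ∃ p ∈ FF m y, k = p.1 ∨ k = p.2)

/-- `R_0(y)`: those `k` with `[k,k] ∈ 𝔉(y)`. -/
def RR0 (m : ℕ) (y : ℕ → ℕ) : Finset ℕ :=
  (Finset.range (m + 1)).filter (fun k => (k, k) ∈ FF m y)

/-- `S(y)`: pairs `(x, x') ∈ X_m × X_m` with `x + x' = y`,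
`𝔖(x) ∪ 𝔖(x') = R(y)`, `𝔖(x) ∩ 𝔖(x') = R_0(y)`, and `𝔖(x') = ∅` if `𝔉'(y) = ∅`. -/
def IsS (m : ℕ) (y x x' : ℕ → ℕ) : Prop :=
  IsX m x ∧ IsX m x' ∧ (∀ i, i ≤ m → x i + x' i = y i) ∧
  SS m x ∪ SS m x' = RR m y ∧ SS m x ∩ SS m x' = RR0 m y ∧
  (FF' m y = ∅ → SS m x' = ∅)

namespace Stmt9

def astep (y : ℕ → ℕ) : ℕ → ℕ
  | 0 => if y 1 = y 0 + 1 then 1 else (y 1 - y 0 + 1) / 2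
  | k+1 => if y (k+2) = y (k+1) + 1 then
      (if y (k+1) = y k + 1 ∧ astep y k = 1 then 0 else 1)
    else (y (k+2) - y (k+1) + 1) / 2

def bstep (y : ℕ → ℕ) (k : ℕ) : ℕ := (y (k+1) - y k) - astep y k

def xx (y : ℕ → ℕ) (k : ℕ) : ℕ := (y 0 + 1) / 2 + ∑ j ∈ Finset.range k, astep y j

def xx' (y : ℕ → ℕ) (k : ℕ) : ℕ := y 0 / 2 + ∑ j ∈ Finset.range k, bstep y j

lemma astep_spec (y : ℕ → ℕ) (k : ℕ) :
    (y (k+1) ≠ y k + 1 ∧ astep y k = (y (k+1) - y k + 1) / 2) ∨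
    (y (k+1) = y k + 1 ∧
      ((astep y k = 1 ∧ ¬(0 < k ∧ y k = y (k-1) + 1 ∧ astep y (k-1) = 1)) ∨
       (astep y k = 0 ∧ (0 < k ∧ y k = y (k-1) + 1 ∧ astep y (k-1) = 1)))) := by
  cases k with
  | zero =>
      by_cases h : y 1 = y 0 + 1 <;> simp [astep, h]
  | succ n =>
      by_cases h : y (n+2) = y (n+1) + 1
      · by_cases h2 : y (n+1) = y n + 1 ∧ astep y n = 1 <;>
          simp [astep, h, h2]
      · simp [astep, h]

lemma astep_flat (y : ℕ → ℕ) (k : ℕ) (h : y (k+1) = y k) : astep y k = 0 := by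
  rcases astep_spec y k with ⟨h1, h2⟩ | ⟨h1, h2⟩ <;> omega

lemma astep_le (y : ℕ → ℕ) (k : ℕ) (h : y k ≤ y (k+1)) :
    y k + astep y k ≤ y (k+1) := by
  rcases astep_spec y k with ⟨h1, h2⟩ | ⟨h1, h2⟩ <;> omega

lemma astep_two (y : ℕ → ℕ) (k : ℕ) (h : y k + 2 ≤ y (k+1)) :
    0 < astep y k ∧ y k + astep y k + 1 ≤ y (k+1) := by
  rcases astep_spec y k with ⟨h1, h2⟩ | ⟨h1, h2⟩ <;> omega

lemma astep_one (y : ℕ → ℕ) (k : ℕ) (h : y (k+1) = y k + 1) : astep y k ≤ 1 := by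
  rcases astep_spec y k with ⟨h1, h2⟩ | ⟨h1, h2⟩ <;> omega

lemma step_sum {y : ℕ → ℕ} {k : ℕ} (h : y k ≤ y (k+1)) :
    y k + astep y k + bstep y k = y (k+1) := by
  have := astep_le y k h; unfold bstep; omega

lemma bstep_flat (y : ℕ → ℕ) (k : ℕ) (h : y (k+1) = y k) : bstep y k = 0 := by
  unfold bstep; omega

lemma bstep_pos (y : ℕ → ℕ) (k : ℕ) (h : y k + 2 ≤ y (k+1)) : 0 < bstep y k := by
  have := astep_two y k h; unfold bstep; omega

lemma bstep_one {y : ℕ → ℕ} {k : ℕ} (h : y (k+1) = y k + 1) :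
    astep y k + bstep y k = 1 := by
  have := astep_one y k h; unfold bstep; omega

lemma xx_succ (y : ℕ → ℕ) (k : ℕ) : xx y (k+1) = xx y k + astep y k := by
  simp [xx, Finset.sum_range_succ, Nat.add_assoc]

lemma xx'_succ (y : ℕ → ℕ) (k : ℕ) : xx' y (k+1) = xx' y k + bstep y k := by
  simp [xx', Finset.sum_range_succ, Nat.add_assoc]

variable {m : ℕ} {y : ℕ → ℕ}

lemma run_start (hy : IsY m y) : ∀ j, j < m → y (j+1) = y j + 1 →
    ∃ s, s ≤ j ∧ (s = 0 ∨ y (s-1) + 2 ≤ y s) ∧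
      (∀ i, s ≤ i → i ≤ j → y (i+1) = y i + 1) ∧
      astep y j = if Even (j - s) then 1 else 0 := by
  intro j
  induction j using Nat.strong_induction_on with
  | _ j ih =>
    intro hjm hδ
    by_cases hst : 0 < j ∧ y j = y (j-1) + 1
    · obtain ⟨hj0, hδp⟩ := hst
      obtain ⟨n, rfl⟩ : ∃ n, j = n + 1 := ⟨j - 1, by omega⟩
      simp only [Nat.add_sub_cancel] at hδp
      obtain ⟨s, hs1, hs2, hs3, hs4⟩ := ih n (by omega) (by omega) hδp
      refine ⟨s, by omega, hs2, ?_, ?_⟩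
      · intro i hi1 hi2
        rcases Nat.lt_or_ge i (n+1) with h | h
        · exact hs3 i hi1 (by omega)
        · have hin : i = n+1 := by omega
          subst hin; exact hδ
      · rcases astep_spec y (n+1) with ⟨g1, _⟩ | ⟨_, g2⟩
        · exact absurd hδ g1
        · simp only [Nat.add_sub_cancel] at g2
          have hsub : n + 1 - s = (n - s) + 1 := by omega
          rw [hsub]
          rcases Nat.even_or_odd (n - s) with he | ho
          · simp only [he, if_true] at hs4
            have hne : ¬ Even (n - s + 1) := by simp [Nat.even_add_one, he]
            simp only [hne, if_false]
            omega
          · have hne : ¬ Even (n - s) := Nat.not_even_iff_odd.mpr ho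
            simp only [hne, if_false] at hs4
            have hev : Even (n - s + 1) := by simp [Nat.even_add_one, hne]
            simp only [hev, if_true]
            omega
    · refine ⟨j, le_rfl, ?_, ?_, ?_⟩
      · rcases Nat.eq_zero_or_pos j with h | h
        · exact Or.inl h
        · right
          obtain ⟨n, rfl⟩ : ∃ n, j = n+1 := ⟨j-1, by omega⟩
          simp only [Nat.add_sub_cancel] at hst ⊢
          have hy2 := hy.2 n (by omega)
          have hy1 := hy.1 n (by omega)
          have hδ' : y (n+2) = y (n+1) + 1 := hδ
          omega
      · intro i h1 h2
        have hij : i = j := le_antisymm h2 h1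
        rw [hij]; exact hδ
      · simp only [Nat.sub_self, Even.zero, if_true]
        rcases astep_spec y j with ⟨g1, _⟩ | ⟨_, g2⟩
        · exact absurd hδ g1
        · omega

lemma run_end (hy : IsY m y) : ∀ j, j < m → y (j+1) = y j + 1 →
    ∃ q, j < q ∧ q ≤ m ∧ (∀ i, j ≤ i → i < q → y (i+1) = y i + 1) ∧
      (q = m ∨ y q + 2 ≤ y (q+1)) := by
  have main : ∀ t j, m - j ≤ t → j < m → y (j+1) = y j + 1 →
      ∃ q, j < q ∧ q ≤ m ∧ (∀ i, j ≤ i → i < q → y (i+1) = y i + 1) ∧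
        (q = m ∨ y q + 2 ≤ y (q+1)) := by
    intro t
    induction t with
    | zero => intro j h1 h2 _; exact absurd h2 (by omega)
    | succ t ih =>
      intro j hle hjm hδ
      by_cases hm : j + 1 = m
      · refine ⟨m, by omega, le_rfl, ?_, Or.inl rfl⟩
        intro i h1 h2
        have hij : i = j := by omega
        subst hij; exact hδ
      · by_cases h2 : y (j+2) = y (j+1) + 1
        · obtain ⟨q, hq1, hq2, hq3, hq4⟩ := ih (j+1) (by omega) (by omega) h2
          refine ⟨q, by omega, hq2, ?_, hq4⟩
          intro i hi1 hi2
          rcases Nat.lt_or_ge i (j+1) with h | h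
          · have hij : i = j := by omega
            subst hij; exact hδ
          · exact hq3 i h hi2
        · refine ⟨j+1, by omega, by omega, ?_, Or.inr ?_⟩
          · intro i h1 h2'
            have hij : i = j := by omega
            subst hij; exact hδ
          · have hy2 := hy.2 j (by omega)
            have hy1 := hy.1 (j+1) (by omega)
            have h2' : y (j+1+1) = y (j+2) := rfl
            omega
  intro j h1 h2; exact main (m - j) j le_rfl h1 h2

lemma sum_eq (hy : IsY m y) : ∀ i, i ≤ m → xx y i + xx' y i = y i := by
  intro i
  induction i with
  | zero => intro _; simp only [xx, xx', Finset.range_zero, Finset.sum_empty]; omega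
  | succ n ih =>
    intro h
    rw [xx_succ, xx'_succ]
    have h1 := step_sum (hy.1 n (by omega))
    have h2 := ih (by omega)
    omega

lemma isX_xx (hy : IsY m y) : IsX m (xx y) := by
  constructor
  · intro i _; rw [xx_succ]; omega
  · intro i hi
    have e1 : xx y (i+2) = xx y (i+1) + astep y (i+1) := xx_succ y (i+1)
    have e2 := xx_succ y i
    have m1 := hy.1 i (by omega)
    have m2 := hy.1 (i+1) (by omega)
    have m3 := hy.2 i hi
    have m3' : y i + 2 ≤ y (i+1+1) := m3
    have m2' : y (i+1) ≤ y (i+1+1) := m2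
    rcases astep_spec y i with ⟨h1, h2⟩ | ⟨h1, h2⟩ <;>
      rcases astep_spec y (i+1) with ⟨g1, g2⟩ | ⟨g1, g2⟩ <;>
        (try simp only [Nat.add_sub_cancel] at g2) <;> omega

lemma isX_xx' (hy : IsY m y) : IsX m (xx' y) := by
  constructor
  · intro i _; rw [xx'_succ]; omega
  · intro i hi
    have e1 : xx' y (i+2) = xx' y (i+1) + bstep y (i+1) := xx'_succ y (i+1)
    have e2 := xx'_succ y i
    have m1 := hy.1 i (by omega)
    have m2 := hy.1 (i+1) (by omega)
    have m3 := hy.2 i hi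
    have m3' : y i + 2 ≤ y (i+1+1) := m3
    have m2' : y (i+1) ≤ y (i+1+1) := m2
    have b1 : bstep y i = (y (i+1) - y i) - astep y i := rfl
    have b2 : bstep y (i+1) = (y (i+1+1) - y (i+1)) - astep y (i+1) := rfl
    rcases astep_spec y i with ⟨h1, h2⟩ | ⟨h1, h2⟩ <;>
      rcases astep_spec y (i+1) with ⟨g1, g2⟩ | ⟨g1, g2⟩ <;>
        (try simp only [Nat.add_sub_cancel] at g2) <;> omega

lemma mem_SS_iff (x : ℕ → ℕ) (k : ℕ) : k ∈ SS m x ↔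
    k < m + 1 ∧ (k = 0 ∨ x (k-1) < x k) ∧ (k = m ∨ x k < x (k+1)) := by
  simp [SS, and_assoc]

lemma mem_SS_xx (k : ℕ) : k ∈ SS m (xx y) ↔
    k ≤ m ∧ (k = 0 ∨ 0 < astep y (k-1)) ∧ (k = m ∨ 0 < astep y k) := by
  rw [mem_SS_iff]
  have h0 : ∀ j, (xx y j < xx y (j+1) ↔ 0 < astep y j) := fun j => by rw [xx_succ]; omega
  cases k with
  | zero => simp [h0 0]
  | succ n =>
    simp only [Nat.add_sub_cancel, h0 n, h0 (n+1), Nat.lt_succ_iff]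
    try omega

lemma mem_SS_xx' (k : ℕ) : k ∈ SS m (xx' y) ↔
    k ≤ m ∧ (k = 0 ∨ 0 < bstep y (k-1)) ∧ (k = m ∨ 0 < bstep y k) := by
  rw [mem_SS_iff]
  have h0 : ∀ j, (xx' y j < xx' y (j+1) ↔ 0 < bstep y j) := fun j => by rw [xx'_succ]; omega
  cases k with
  | zero => simp [h0 0]
  | succ n =>
    simp only [Nat.add_sub_cancel, h0 n, h0 (n+1), Nat.lt_succ_iff]
    try omega

lemma mem_FF_iff (p q : ℕ) : ((p, q) ∈ FF m y) ↔
    (p ≤ q ∧ q ≤ m ∧ (p = 0 ∨ y (p-1) + 2 ≤ y p) ∧ (q = m ∨ y q + 2 ≤ y (q+1)) ∧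
      ∀ j, p ≤ j → j < q → y (j+1) = y j + 1) := by
  simp only [FF, mem_filter, mem_product, mem_range, mem_Ico, Nat.lt_succ_iff]
  constructor
  · rintro ⟨⟨hp, hq⟩, hpq, hL, hR, hE⟩
    refine ⟨hpq, hq, ?_, ?_, ?_⟩
    · rcases hL with h | h
      · exact Or.inl h
      · right; omega
    · rcases hR with h | h
      · exact Or.inl h
      · right; omega
    · intro j h1 h2; have := hE j ⟨h1, h2⟩; omega
  · rintro ⟨hpq, hq, hL, hR, hE⟩
    refine ⟨⟨by omega, hq⟩, hpq, ?_, ?_, ?_⟩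
    · rcases hL with h | h
      · exact Or.inl h
      · right; omega
    · rcases hR with h | h
      · exact Or.inl h
      · right; omega
    · intro j hj
      have := hE j hj.1 hj.2
      omega

lemma mem_RR_iff (k : ℕ) : k ∈ RR m y ↔
    k ≤ m ∧ ∃ p q, (p, q) ∈ FF m y ∧ (k = p ∨ k = q) := by
  simp [RR, Nat.lt_succ_iff, Prod.exists]

lemma mem_RR0_iff (k : ℕ) : k ∈ RR0 m y ↔ k ≤ m ∧ (k, k) ∈ FF m y := by
  simp [RR0, Nat.lt_succ_iff]

lemma SS_xx_subset (hy : IsY m y) {k : ℕ} (hk : k ∈ SS m (xx y)) : k ∈ RR m y := by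
  rw [mem_SS_xx] at hk
  obtain ⟨hkm, h1, h2⟩ := hk
  rw [mem_RR_iff]
  refine ⟨hkm, ?_⟩
  by_cases hR : k = m ∨ y k + 2 ≤ y (k+1)
  · by_cases hL : k = 0 ∨ y (k-1) + 2 ≤ y k
    · exact ⟨k, k, (mem_FF_iff k k).mpr ⟨le_rfl, hkm, hL, hR, fun j hj1 hj2 => by omega⟩,
        Or.inl rfl⟩
    · obtain ⟨n, rfl⟩ : ∃ n, k = n + 1 := ⟨k - 1, by omega⟩
      simp only [Nat.add_sub_cancel] at h1 hL
      have hn : n < m := by omega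
      have hmono := hy.1 n hn
      have ha : 0 < astep y n := by omega
      have hδ : y (n+1) = y n + 1 := by
        rcases Nat.lt_or_ge (y (n+1)) (y n + 1) with h | h
        · exact absurd (astep_flat y n (by omega)) (by omega)
        · omega
      obtain ⟨s, hs1, hs2, hs3, _⟩ := run_start hy n hn hδ
      refine ⟨s, n+1, (mem_FF_iff s (n+1)).mpr
        ⟨by omega, by omega, hs2, hR, fun j hj1 hj2 => hs3 j hj1 (by omega)⟩, Or.inr rfl⟩
  · push_neg at hR
    obtain ⟨hkm', hR2⟩ := hR
    have hklt : k < m := by omega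
    have ha : 0 < astep y k := by omega
    have hmono := hy.1 k hklt
    have hδ : y (k+1) = y k + 1 := by
      rcases Nat.lt_or_ge (y (k+1)) (y k + 1) with h | h
      · exact absurd (astep_flat y k (by omega)) (by omega)
      · omega
    have hL : k = 0 ∨ y (k-1) + 2 ≤ y k := by
      by_contra hc
      push_neg at hc
      obtain ⟨hk0, hlt⟩ := hc
      obtain ⟨n, rfl⟩ : ∃ n, k = n + 1 := ⟨k - 1, by omega⟩
      simp only [Nat.add_sub_cancel] at h1 hlt
      have h1' : 0 < astep y n := by omega
      have hmono' := hy.1 n (by omega)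
      rcases Nat.lt_or_ge (y (n+1)) (y n + 1) with hf | hf
      · exact absurd (astep_flat y n (by omega)) (by omega)
      · have hδn : y (n+1) = y n + 1 := by omega
        have hle := astep_one y n hδn
        rcases astep_spec y (n+1) with ⟨g1, g2⟩ | ⟨g1, g2⟩
        · exact g1 hδ
        · simp only [Nat.add_sub_cancel] at g2
          omega
    obtain ⟨q, hq1, hq2, hq3, hq4⟩ := run_end hy k hklt hδ
    exact ⟨k, q, (mem_FF_iff k q).mpr ⟨by omega, hq2, hL, hq4, hq3⟩, Or.inl rfl⟩

lemma SS_xx'_subset (hy : IsY m y) {k : ℕ} (hk : k ∈ SS m (xx' y)) : k ∈ RR m y := by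
  rw [mem_SS_xx'] at hk
  obtain ⟨hkm, h1, h2⟩ := hk
  rw [mem_RR_iff]
  refine ⟨hkm, ?_⟩
  by_cases hR : k = m ∨ y k + 2 ≤ y (k+1)
  · by_cases hL : k = 0 ∨ y (k-1) + 2 ≤ y k
    · exact ⟨k, k, (mem_FF_iff k k).mpr ⟨le_rfl, hkm, hL, hR, fun j hj1 hj2 => by omega⟩,
        Or.inl rfl⟩
    · obtain ⟨n, rfl⟩ : ∃ n, k = n + 1 := ⟨k - 1, by omega⟩
      simp only [Nat.add_sub_cancel] at h1 hL
      have hn : n < m := by omega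
      have hmono := hy.1 n hn
      have hb : 0 < bstep y n := by omega
      have hδ : y (n+1) = y n + 1 := by
        rcases Nat.lt_or_ge (y (n+1)) (y n + 1) with h | h
        · exact absurd (bstep_flat y n (by omega)) (by omega)
        · omega
      obtain ⟨s, hs1, hs2, hs3, _⟩ := run_start hy n hn hδ
      refine ⟨s, n+1, (mem_FF_iff s (n+1)).mpr
        ⟨by omega, by omega, hs2, hR, fun j hj1 hj2 => hs3 j hj1 (by omega)⟩, Or.inr rfl⟩
  · push_neg at hR
    obtain ⟨hkm', hR2⟩ := hR
    exfalso
    have hklt : k < m := by omega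
    have hb : 0 < bstep y k := by omega
    have hmono := hy.1 k hklt
    have hδ : y (k+1) = y k + 1 := by
      rcases Nat.lt_or_ge (y (k+1)) (y k + 1) with h | h
      · exact absurd (bstep_flat y k (by omega)) (by omega)
      · omega
    have hsum := bstep_one hδ
    have ha0 : astep y k = 0 := by omega
    rcases astep_spec y k with ⟨g1, g2⟩ | ⟨g1, g2⟩
    · exact g1 hδ
    · have hc : 0 < k ∧ y k = y (k-1) + 1 ∧ astep y (k-1) = 1 := by omega
      obtain ⟨n, rfl⟩ : ∃ n, k = n + 1 := ⟨k - 1, by omega⟩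
      simp only [Nat.add_sub_cancel] at hc h1
      have hbp := bstep_one hc.2.1
      omega

lemma RR_subset (hy : IsY m y) {k : ℕ} (hk : k ∈ RR m y) :
    k ∈ SS m (xx y) ∪ SS m (xx' y) := by
  rw [mem_RR_iff] at hk
  obtain ⟨hkm, p, q, hpq, hk⟩ := hk
  rw [mem_FF_iff] at hpq
  obtain ⟨h1, h2, hL, hR, hE⟩ := hpq
  rw [mem_union, mem_SS_xx, mem_SS_xx']
  rcases hk with rfl | rfl
  · -- k = p
    have left_a : (k = 0 ∨ 0 < astep y (k-1)) ∧ (k = 0 ∨ 0 < bstep y (k-1)) := by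
      cases k with
      | zero => exact ⟨Or.inl rfl, Or.inl rfl⟩
      | succ n =>
        simp only [Nat.add_sub_cancel]
        rcases hL with h | h
        · exact absurd h (by omega)
        · simp only [Nat.add_sub_cancel] at h
          exact ⟨Or.inr (astep_two y n h).1, Or.inr (bstep_pos y n h)⟩
    rcases eq_or_lt_of_le h1 with rfl | hlt
    · -- p = q (= k)
      left
      refine ⟨hkm, left_a.1, ?_⟩
      rcases hR with h | h
      · exact Or.inl h
      · exact Or.inr (astep_two y k h).1
    · -- p < q
      have hδ : y (k+1) = y k + 1 := hE k le_rfl hlt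
      have ha : 0 < astep y k := by
        rcases astep_spec y k with ⟨g1, g2⟩ | ⟨g1, g2⟩
        · exact absurd hδ g1
        · rcases hL with h | h <;> omega
      exact Or.inl ⟨hkm, left_a.1, Or.inr ha⟩
  · -- k = q
    have right_ab : (k = m ∨ 0 < astep y k) ∧ (k = m ∨ 0 < bstep y k) := by
      rcases hR with h | h
      · exact ⟨Or.inl h, Or.inl h⟩
      · exact ⟨Or.inr (astep_two y k h).1, Or.inr (bstep_pos y k h)⟩
    rcases eq_or_lt_of_le h1 with heq | hlt
    · left
      refine ⟨hkm, ?_, right_ab.1⟩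
      cases k with
      | zero => exact Or.inl rfl
      | succ n =>
        simp only [Nat.add_sub_cancel]
        rcases hL with h | h
        · exact absurd h (by omega)
        · subst heq
          simp only [Nat.add_sub_cancel] at h
          exact Or.inr (astep_two y n h).1
    · obtain ⟨n, rfl⟩ : ∃ n, k = n + 1 := ⟨k - 1, by omega⟩
      have hδ : y (n+1) = y n + 1 := hE n (by omega) (by omega)
      have hsum := bstep_one hδ
      rcases Nat.lt_or_ge 0 (astep y n) with ha | ha
      · left
        refine ⟨hkm, ?_, right_ab.1⟩
        simp only [Nat.add_sub_cancel]
        exact Or.inr ha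
      · right
        refine ⟨hkm, ?_, right_ab.2⟩
        simp only [Nat.add_sub_cancel]
        exact Or.inr (by omega)

lemma union_eq (hy : IsY m y) : SS m (xx y) ∪ SS m (xx' y) = RR m y := by
  ext k
  constructor
  · intro hk
    rcases mem_union.mp hk with h | h
    · exact SS_xx_subset hy h
    · exact SS_xx'_subset hy h
  · exact RR_subset hy

lemma inter_eq (hy : IsY m y) : SS m (xx y) ∩ SS m (xx' y) = RR0 m y := by
  ext k
  rw [mem_inter, mem_SS_xx, mem_SS_xx', mem_RR0_iff, mem_FF_iff]
  constructor
  · rintro ⟨⟨hkm, a1, a2⟩, ⟨_, b1, b2⟩⟩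
    refine ⟨hkm, le_rfl, hkm, ?_, ?_, fun j hj1 hj2 => by omega⟩
    · cases k with
      | zero => exact Or.inl rfl
      | succ n =>
        right
        simp only [Nat.add_sub_cancel] at a1 b1
        have := step_sum (hy.1 n (by omega))
        simp only [Nat.add_sub_cancel]
        omega
    · by_cases hkm2 : k = m
      · exact Or.inl hkm2
      · right
        have := step_sum (hy.1 k (by omega))
        omega
  · rintro ⟨hkm, -, -, hL, hR, -⟩
    have left_ab : (k = 0 ∨ 0 < astep y (k-1)) ∧ (k = 0 ∨ 0 < bstep y (k-1)) := by
      cases k with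
      | zero => exact ⟨Or.inl rfl, Or.inl rfl⟩
      | succ n =>
        simp only [Nat.add_sub_cancel]
        rcases hL with h | h
        · exact absurd h (by omega)
        · simp only [Nat.add_sub_cancel] at h
          exact ⟨Or.inr (astep_two y n h).1, Or.inr (bstep_pos y n h)⟩
    have right_ab : (k = m ∨ 0 < astep y k) ∧ (k = m ∨ 0 < bstep y k) := by
      rcases hR with h | h
      · exact ⟨Or.inl h, Or.inl h⟩
      · exact ⟨Or.inr (astep_two y k h).1, Or.inr (bstep_pos y k h)⟩
    exact ⟨⟨hkm, left_ab.1, right_ab.1⟩, ⟨hkm, left_ab.2, right_ab.2⟩⟩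

lemma empty_imp (hy : IsY m y) (hFF : FF' m y = ∅) : SS m (xx' y) = ∅ := by
  rw [Finset.eq_empty_iff_forall_notMem]
  intro k hk
  rw [mem_SS_xx'] at hk
  obtain ⟨hkm, h1, h2⟩ := hk
  have key : ∀ p q : ℕ, (p, q) ∈ FF m y → ¬ Odd (q - p + 1) := by
    intro p q hpq hodd
    have hm : (p, q) ∈ FF' m y := by
      rw [FF', mem_filter]; exact ⟨hpq, hodd⟩
    rw [hFF] at hm
    exact Finset.notMem_empty _ hm
  by_cases hR : k = m ∨ y k + 2 ≤ y (k+1)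
  · by_cases hL : k = 0 ∨ y (k-1) + 2 ≤ y k
    · exact key k k ((mem_FF_iff k k).mpr ⟨le_rfl, hkm, hL, hR, fun j hj1 hj2 => by omega⟩)
        ⟨0, by omega⟩
    · obtain ⟨n, rfl⟩ : ∃ n, k = n + 1 := ⟨k - 1, by omega⟩
      simp only [Nat.add_sub_cancel] at h1 hL
      have hn : n < m := by omega
      have hmono := hy.1 n hn
      have hb : 0 < bstep y n := by omega
      have hδ : y (n+1) = y n + 1 := by
        rcases Nat.lt_or_ge (y (n+1)) (y n + 1) with h | h
        · exact absurd (bstep_flat y n (by omega)) (by omega)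
        · omega
      obtain ⟨s, hs1, hs2, hs3, hs4⟩ := run_start hy n hn hδ
      have hsum := bstep_one hδ
      have ha0 : astep y n = 0 := by omega
      have hodd : ¬ Even (n - s) := by
        intro he
        rw [if_pos he] at hs4
        omega
      refine key s (n+1) ((mem_FF_iff s (n+1)).mpr
        ⟨by omega, by omega, hs2, hR, fun j hj1 hj2 => hs3 j hj1 (by omega)⟩) ?_
      have ho : Odd (n - s) := Nat.not_even_iff_odd.mp hodd
      obtain ⟨t, ht⟩ := ho
      exact ⟨t + 1, by omega⟩
  · push_neg at hR
    obtain ⟨hkm', hR2⟩ := hR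
    have hklt : k < m := by omega
    have hb : 0 < bstep y k := by omega
    have hmono := hy.1 k hklt
    have hδ : y (k+1) = y k + 1 := by
      rcases Nat.lt_or_ge (y (k+1)) (y k + 1) with h | h
      · exact absurd (bstep_flat y k (by omega)) (by omega)
      · omega
    have hsum := bstep_one hδ
    have ha0 : astep y k = 0 := by omega
    rcases astep_spec y k with ⟨g1, g2⟩ | ⟨g1, g2⟩
    · exact g1 hδ
    · have hc : 0 < k ∧ y k = y (k-1) + 1 ∧ astep y (k-1) = 1 := by omega
      obtain ⟨n, rfl⟩ : ∃ n, k = n + 1 := ⟨k - 1, by omega⟩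
      simp only [Nat.add_sub_cancel] at hc h1
      have hbp := bstep_one hc.2.1
      omega

end Stmt9

theorem stmt9 (m : ℕ) (y : ℕ → ℕ) (hy : IsY m y) :
    ∃ x x' : ℕ → ℕ, IsS m y x x' :=
  ⟨Stmt9.xx y, Stmt9.xx' y, Stmt9.isX_xx hy, Stmt9.isX_xx' hy, Stmt9.sum_eq hy,
    Stmt9.union_eq hy, Stmt9.inter_eq hy, Stmt9.empty_imp hy⟩
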